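/- For the encoding f of ω-branching trees into binary trees (node (n₁,...,n_k) ↦ binary node r^{n₁} l r^{n₂} l ... r^{n_k} l, with all such encoded nodes and their right-ancestors labelled a and everything else b), the binary tree f(T) has an a-labelled branch turning left infinitely often if and only if T has an infinite branch. -/

import Mathlib

open Classical

/-- Infinite binary trees over {a,b}; `true` = a, `false` = b. -/
abbrev Tree2 := List (Fin 2) → Bool

/-- The length-`n` prefix of a branch. -/
def pre (β : ℕ → Fin 2) (n : ℕ) : List (Fin 2) := List.ofFn (fun i : Fin n => β i)

/-- A branch is good: all its finite prefixes are labelled `a` and it turns left (0)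
infinitely often. -/
def Good (t : Tree2) (β : ℕ → Fin 2) : Prop :=
  (∀ n, t (pre β n) = true) ∧ (∀ m, ∃ n ≥ m, β n = 0)

/-- `β` is strictly to the left of `γ`. -/
def LeftOf (β γ : ℕ → Fin 2) : Prop :=
  ∃ n, (∀ i < n, β i = γ i) ∧ β n = 0 ∧ γ n = 1

/-- A branch passes through a node. -/
def Through (γ : ℕ → Fin 2) (v : List (Fin 2)) : Prop := pre γ v.length = v

/-- The encoding (n₁,…,n_k) ↦ r^{n₁} l r^{n₂} l ⋯ r^{n_k} l, with r = 1 and l = 0. -/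
def enc : List ℕ → List (Fin 2)
  | [] => []
  | n :: u => List.replicate n (1 : Fin 2) ++ (0 : Fin 2) :: enc u

/-- The reduction: a node of `fT T` is labelled `a` iff it is a prefix of some word
`enc u ++ r^m` with `u ∈ T`. -/
noncomputable def fT (T : List ℕ → Bool) : Tree2 := fun v =>
  if ∃ u m, T u = true ∧ v <+: (enc u ++ List.replicate m (1 : Fin 2)) then true else false

lemma enc_append (u : List ℕ) (a : ℕ) :
    enc (u ++ [a]) = enc u ++ (List.replicate a (1:Fin 2) ++ [0]) := by
  induction u with
  | nil => simp [enc]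
  | cons n u ih => simp [enc, ih]

lemma strip : ∀ (n n' : ℕ) (s s' : List (Fin 2)),
    List.replicate n (1:Fin 2) ++ (0:Fin 2) :: s <+:
      List.replicate n' (1:Fin 2) ++ (0:Fin 2) :: s' → n = n' ∧ s <+: s' := by
  intro n
  induction n with
  | zero =>
    intro n' s s' h
    cases n' with
    | zero =>
      simp only [List.replicate, List.nil_append, List.cons_prefix_cons] at h
      exact ⟨rfl, h.2⟩
    | succ n' =>
      rw [List.replicate_succ] at h
      simp only [List.replicate_zero, List.nil_append, List.cons_append,
        List.cons_prefix_cons] at h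
      exact absurd h.1 (by decide)
  | succ n ih =>
    intro n' s s' h
    cases n' with
    | zero =>
      rw [List.replicate_succ] at h
      simp only [List.replicate_zero, List.nil_append, List.cons_append,
        List.cons_prefix_cons] at h
      exact absurd h.1 (by decide)
    | succ n' =>
      rw [List.replicate_succ, List.replicate_succ] at h
      simp only [List.cons_append, List.cons_prefix_cons] at h
      obtain ⟨he, hs⟩ := ih n' s s' h.2
      exact ⟨by omega, hs⟩

lemma enc_prefix : ∀ (w u : List ℕ) (m : ℕ),
    enc w <+: enc u ++ List.replicate m (1:Fin 2) → w <+: u := by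
  intro w
  induction w with
  | nil => intro u m _; exact List.nil_prefix
  | cons n w ih =>
    intro u m h
    cases u with
    | nil =>
      exfalso
      simp only [enc, List.nil_append] at h
      have h0 : (0:Fin 2) ∈ List.replicate m (1:Fin 2) :=
        h.subset (by simp)
      rw [List.mem_replicate] at h0
      exact absurd h0.2 (by decide)
    | cons n' u =>
      simp only [enc, List.append_assoc, List.cons_append] at h
      obtain ⟨he, hs⟩ := strip n n' _ _ h
      subst he
      exact List.cons_prefix_cons.mpr ⟨rfl, ih u m hs⟩

lemma getD_prefix {l l' : List (Fin 2)} (h : l <+: l') {n : ℕ} (hn : n < l.length) :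
    l'.getD n 1 = l.getD n 1 := by
  obtain ⟨t, rfl⟩ := h
  rw [List.getD_eq_getElem _ _ hn,
      List.getD_eq_getElem _ _ (lt_of_lt_of_le hn (by simp)),
      List.getElem_append_left hn]

lemma pre_succ (β : ℕ → Fin 2) (n : ℕ) : pre β (n+1) = pre β n ++ [β n] := by
  rw [pre, List.ofFn_succ', List.concat_eq_append]; rfl

lemma pre_seg (β : ℕ → Fin 2) (a : ℕ) : ∀ c, (∀ i, a ≤ i → i < a + c → β i = 1) →
    pre β (a + c) = pre β a ++ List.replicate c 1 := by
  intro c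
  induction c with
  | zero => simp
  | succ c ih =>
    intro h
    have h1 : β (a + c) = 1 := h _ (by omega) (by omega)
    rw [show a + (c+1) = (a+c)+1 from rfl, pre_succ, ih (fun i hi1 hi2 => h i hi1 (by omega)),
      h1, List.replicate_succ']
    simp

lemma ofFn_prefix (x : ℕ → ℕ) (k : ℕ) :
    (List.ofFn fun i : Fin k => x i) <+: (List.ofFn fun i : Fin (k+1) => x i) := by
  rw [List.ofFn_succ' (fun i : Fin (k+1) => x i), List.concat_eq_append]
  exact List.prefix_append _ _

lemma enc_ofFn_succ (x : ℕ → ℕ) (k : ℕ) :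
    enc (List.ofFn fun i : Fin (k+1) => x i) =
      enc (List.ofFn fun i : Fin k => x i) ++ (List.replicate (x k) (1:Fin 2) ++ [0]) := by
  rw [List.ofFn_succ' (fun i : Fin (k+1) => x i), List.concat_eq_append, enc_append]
  rfl

/-- The binary tree `fT T` has a good branch iff the prefix-closed tree `T` has an
infinite branch. -/
theorem encoding_correct (T : List ℕ → Bool)
    (hpc : ∀ u v : List ℕ, u <+: v → T v = true → T u = true) :
    (∃ β, Good (fT T) β) ↔
      ∃ x : ℕ → ℕ, ∀ k : ℕ, T (List.ofFn fun i : Fin k => x i) = true := by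
  classical
  have fT_iff : ∀ v, fT T v = true ↔
      ∃ u m, T u = true ∧ v <+: (enc u ++ List.replicate m (1 : Fin 2)) := by
    intro v
    by_cases h : ∃ u m, T u = true ∧ v <+: (enc u ++ List.replicate m (1 : Fin 2)) <;>
      simp [fT, h]
  have fin2 : ∀ v : Fin 2, v ≠ 0 → v = 1 := by decide
  constructor
  · rintro ⟨β, hβ, hβ0⟩
    have hinf : {n | β n = 0}.Infinite := by
      apply Set.infinite_of_forall_exists_gt
      intro a
      obtain ⟨n, hn, h0⟩ := hβ0 (a+1)
      exact ⟨n, h0, by omega⟩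
    set Z : ℕ → Prop := fun n => β n = 0 with hZ
    have hinf' : (setOf Z).Infinite := hinf
    set p : ℕ → ℕ := fun k => Nat.nth Z k with hp
    have hmem : ∀ k, β (p k) = 0 := fun k => Nat.nth_mem_of_infinite hinf' k
    have hmono : ∀ j k, j ≤ k → p j ≤ p k := fun j k h => (Nat.nth_le_nth hinf').mpr h
    have hsmono : ∀ j k, j < k → p j < p k := fun j k h => (Nat.nth_lt_nth hinf').mpr h
    -- if β i = 0 then i is one of the p's
    have hisp : ∀ i, β i = 0 → ∃ j, p j = i := by
      intro i hi
      exact ⟨Nat.count Z i, Nat.nth_count hi⟩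
    have hbefore : ∀ i, i < p 0 → β i = 1 := by
      intro i hi
      refine fin2 _ (fun h0 => ?_)
      obtain ⟨j, hj⟩ := hisp i h0
      have := hmono 0 j (Nat.zero_le j)
      omega
    have hbetween : ∀ k i, p k < i → i < p (k+1) → β i = 1 := by
      intro k i h1 h2
      refine fin2 _ (fun h0 => ?_)
      obtain ⟨j, hj⟩ := hisp i h0
      rcases le_or_gt j k with h | h
      · have := hmono j k h; omega
      · have := hmono (k+1) j h; omega
    set x : ℕ → ℕ := fun k => match k with
      | 0 => p 0
      | k+1 => p (k+1) - p k - 1 with hx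
    have key : ∀ k, pre β (p k + 1) = enc (List.ofFn fun i : Fin (k+1) => x i) := by
      intro k
      induction k with
      | zero =>
        have h1 : (List.ofFn fun i : Fin 1 => x i) = [p 0] := by
          simp [List.ofFn_succ, hx]
        rw [h1, pre_succ, hmem 0]
        have h2 : pre β (p 0) = pre β (0 + p 0) := by norm_num
        rw [h2, pre_seg β 0 (p 0) (fun i hi1 hi2 => hbefore i (by omega))]
        simp [enc, pre]
      | succ k ih =>
        have hlt : p k < p (k+1) := hsmono k (k+1) (Nat.lt_succ_self k)
        have harith : p (k+1) = (p k + 1) + x (k+1) := by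
          simp only [hx]; omega
        rw [enc_ofFn_succ, ← ih, pre_succ, hmem (k+1)]
        have hseg : pre β (p (k+1)) = pre β (p k + 1) ++ List.replicate (x (k+1)) 1 := by
          rw [harith]
          exact pre_seg β (p k + 1) (x (k+1))
            (fun i hi1 hi2 => hbetween k i (by omega) (by omega))
        rw [hseg]
        simp
    refine ⟨x, fun k => ?_⟩
    have h1 := (fT_iff _).mp (hβ (p k + 1))
    rw [key k] at h1
    obtain ⟨u, m, hu, hpre⟩ := h1
    have hT : T (List.ofFn fun i : Fin (k+1) => x i) = true :=
      hpc _ u (enc_prefix _ u m hpre) hu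
    exact hpc _ _ (ofFn_prefix x k) hT
  · rintro ⟨x, hx⟩
    set u : ℕ → List ℕ := fun k => List.ofFn fun i : Fin k => x i with hu
    have hchain : ∀ k, enc (u k) <+: enc (u (k+1)) := by
      intro k
      rw [hu]
      simp only []
      rw [enc_ofFn_succ]
      exact List.prefix_append _ _
    have hmono : ∀ j k, j ≤ k → enc (u j) <+: enc (u k) := by
      intro j k h
      induction h with
      | refl => exact List.prefix_refl _
      | step h ih => exact ih.trans (hchain _)
    have hlen1 : ∀ k, (enc (u (k+1))).length = (enc (u k)).length + x k + 1 := by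
      intro k
      rw [hu]
      simp only []
      rw [enc_ofFn_succ]
      simp
      omega
    have hlen : ∀ k, k ≤ (enc (u k)).length := by
      intro k
      induction k with
      | zero => simp
      | succ k ih => rw [hlen1 k]; omega
    set β : ℕ → Fin 2 := fun n => (enc (u (n+1))).getD n 1 with hβ
    have hβeq : ∀ n k, n < (enc (u k)).length → β n = (enc (u k)).getD n 1 := by
      intro n k hn
      rcases le_total (n+1) k with h | h
      · have hn' : n < (enc (u (n+1))).length := lt_of_lt_of_le (Nat.lt_succ_self n) (hlen (n+1))
        exact (getD_prefix (hmono _ _ h) hn').symm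
      · exact getD_prefix (hmono _ _ h) hn
    have hpre_take : ∀ k n, n ≤ (enc (u k)).length → pre β n = (enc (u k)).take n := by
      intro k n hn
      apply List.ext_getElem
      · simp [pre]; omega
      · intro i h1 h2
        have hi' : i < n := by simpa [pre] using h1
        have hi : i < (enc (u k)).length := lt_of_lt_of_le hi' hn
        simp only [pre, List.getElem_ofFn, List.getElem_take]
        exact (hβeq i k hi).trans (List.getD_eq_getElem _ _ hi)
    refine ⟨β, fun n => ?_, fun m => ?_⟩
    · rw [fT_iff]
      refine ⟨u n, 0, hx n, ?_⟩
      rw [hpre_take n n (hlen n)]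
      simpa using List.take_prefix n (enc (u n))
    · refine ⟨(enc (u m)).length + x m, by have := hlen m; omega, ?_⟩
      have hn : (enc (u m)).length + x m < (enc (u (m+1))).length := by rw [hlen1]; omega
      rw [hβeq _ (m+1) hn, List.getD_eq_getElem _ _ hn]
      have he : enc (u (m+1)) = (enc (u m) ++ List.replicate (x m) (1:Fin 2)) ++ [(0:Fin 2)] := by
        rw [hu]
        simp only []
        rw [enc_ofFn_succ]
        simp
      simp only [he]
      exact List.getElem_concat_length (by simp) _
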